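/- arXiv:1907.07097 — 3 statements merged into one kernel-verified Lean document; each statement's English description precedes it below -/
import Mathlib

section
/- Let q be odd. Let n ≥ 1, let M be an n×n symmetric matrix over O, u ∈ O^n, m ∈ O, and f(x) = xᵀMx + u·x + m. Let ϖ ∈ O be monic irreducible and k ≥ 1 an integer, and set S = Σ_{x} ψ(f(x)/ϖ^k), the sum over x ∈ O^n with |x| < |ϖ|^k. Then |S| ≤ |ϖ|^{nk/2}·√(#{x ∈ O^n : |x| < |ϖ|^k and ϖ^k divides every coordinate of M·x}). -/
set_option autoImplicit false
set_option linter.unusedSectionVars false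
set_option maxHeartbeats 1000000


noncomputable section

open Polynomial Matrix
open scoped Classical

variable {Fq : Type} [Field Fq] [Fintype Fq]

/-- The absolute value on `O = Fq[t]`: `|x| = q ^ deg x` for `x ≠ 0`, and `|0| = 0`. -/
def Oabs (x : Fq[X]) : ℝ := if x = 0 then 0 else (Fintype.card Fq : ℝ) ^ x.natDegree

/-- The maximum norm on pairs of polynomials. -/
def Oabs2 (a : Fq[X] × Fq[X]) : ℝ := max (Oabs a.1) (Oabs a.2)

/-- A pair `c = (c₁, c₂)` is primitive if `gcd(c₁,c₂) = 1` and either `c₁` is monic,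
or `c₁ = 0` and `c₂` is monic. -/
def Primitive (c : Fq[X] × Fq[X]) : Prop :=
  IsCoprime c.1 c.2 ∧ (c.1.Monic ∨ (c.1 = 0 ∧ c.2.Monic))

/-- `gcd(a, b, r) = 1`: every common divisor of `a`, `b` and `r` is a unit. -/
def CoprimeTriple (a b r : Fq[X]) : Prop :=
  ∀ p : Fq[X], p ∣ a → p ∣ b → p ∣ r → IsUnit p

/-- `a/r` lies on the generalised line `L(d·c)`: there is `k` with
`d(c₁a₁ + c₂a₂) = k·r` and `gcd(d,k) = 1`. -/
def OnLine (d : Fq[X]) (c : Fq[X] × Fq[X]) (r : Fq[X]) (a : Fq[X] × Fq[X]) : Prop :=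
  ∃ k : Fq[X], d * (c.1 * a.1 + c.2 * a.2) = k * r ∧ IsCoprime d k

/-- The embedding of `O = Fq[t]` into `K_∞ = Fq((1/t))`, realised as formal Laurent
series in the variable `u = t⁻¹`; the polynomial variable `t` is sent to `u⁻¹`. -/
def OtoK : Fq[X] →+* LaurentSeries Fq :=
  Polynomial.eval₂RingHom HahnSeries.C (HahnSeries.single (-1 : ℤ) 1)

/-- The absolute value on `K_∞`: `|x| = q^{deg x}`, i.e. `q^{-ord_u x}` where `u = t⁻¹`. -/
def Kabs (x : LaurentSeries Fq) : ℝ :=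
  if x = 0 then 0 else (Fintype.card Fq : ℝ) ^ (-x.order)


lemma OtoK_monomial (i : ℕ) (a : Fq) :
    OtoK (monomial i a) = HahnSeries.single (-(i:ℤ)) a := by
  show Polynomial.eval₂ _ _ _ = _
  rw [Polynomial.eval₂_monomial, HahnSeries.single_pow, HahnSeries.C_apply,
    HahnSeries.single_mul_single]
  simp

lemma OtoK_coeff (p : Fq[X]) (j : ℤ) :
    (OtoK p).coeff j = if j ≤ 0 then p.coeff (-j).toNat else 0 := by
  induction p using Polynomial.induction_on' with
  | add p q hp hq => rw [map_add, HahnSeries.coeff_add, hp, hq]; split <;> simp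
  | monomial i a =>
      rw [OtoK_monomial, HahnSeries.coeff_single, Polynomial.coeff_monomial]
      by_cases h : j = -(i:ℤ)
      · subst h; simp
      · rw [if_neg h]
        split
        · rw [if_neg]; omega
        · rfl

lemma OtoK_ne_zero {p : Fq[X]} (hp : p ≠ 0) : OtoK p ≠ 0 := by
  intro h
  have := OtoK_coeff p (-(p.natDegree : ℤ))
  rw [h] at this
  simp only [HahnSeries.coeff_zero] at this
  rw [if_pos (by omega)] at this
  simp only [neg_neg, Int.toNat_natCast] at this
  exact Polynomial.leadingCoeff_ne_zero.mpr hp this.symm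

lemma OtoK_order {p : Fq[X]} (hp : p ≠ 0) : (OtoK p).order = -(p.natDegree : ℤ) := by
  refine le_antisymm (HahnSeries.order_le_of_coeff_ne_zero ?_) ?_
  · rw [OtoK_coeff, if_pos (by omega)]
    simpa using Polynomial.leadingCoeff_ne_zero.mpr hp
  · by_contra hlt
    push_neg at hlt
    have h1 := HahnSeries.coeff_order_eq_zero.not.mpr (OtoK_ne_zero hp)
    rw [OtoK_coeff] at h1
    by_cases h2 : (OtoK p).order ≤ 0
    · rw [if_pos h2] at h1
      exact h1 (Polynomial.coeff_eq_zero_of_natDegree_lt (by omega))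
    · exact h1 (if_neg h2)

lemma Kabs_small_order {w : LaurentSeries Fq} (h : w = 0 ∨ 2 ≤ w.order) :
    Kabs w ≤ (Fintype.card Fq : ℝ) ^ (-2 : ℤ) := by
  have hq : (1:ℝ) < (Fintype.card Fq : ℝ) := by exact_mod_cast Fintype.one_lt_card
  rcases h with rfl | h
  · rw [Kabs, if_pos rfl]; positivity
  · rcases eq_or_ne w 0 with rfl | hw
    · rw [Kabs, if_pos rfl]; positivity
    · rw [Kabs, if_neg hw]
      exact zpow_le_zpow_right₀ hq.le (by omega)

lemma Kabs_small {w : LaurentSeries Fq} (h : ∀ j : ℤ, j ≤ 1 → w.coeff j = 0) :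
    Kabs w ≤ (Fintype.card Fq : ℝ) ^ (-2 : ℤ) := by
  apply Kabs_small_order
  rcases eq_or_ne w 0 with rfl | hw
  · exact Or.inl rfl
  · refine Or.inr ?_
    by_contra hc
    push_neg at hc
    exact HahnSeries.coeff_order_eq_zero.not.mpr hw (h _ (by omega))

lemma key_nontrivial (ϖ : Fq[X]) (hmon : ϖ.Monic) (hirr : Irreducible ϖ) (k : ℕ) (hk : 1 ≤ k)
    (ψ : LaurentSeries Fq → ℂ)
    (hψ2 : ∀ x y, ψ (x + y) = ψ x * ψ y)
    (hψ3 : ∀ p : Fq[X], ψ (OtoK p) = 1)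
    (hψ4 : ∀ x, Kabs x ≤ (Fintype.card Fq : ℝ) ^ (-2 : ℤ) → ψ x = 1)
    (hψ5 : ∃ x, Kabs x ≤ (Fintype.card Fq : ℝ) ^ (-1 : ℤ) ∧ ψ x ≠ 1)
    {a : Fq[X]} (ha : ¬ ϖ^k ∣ a) :
    ∃ p₀ : Fq[X], p₀.degree < ((k * ϖ.natDegree : ℕ) : WithBot ℕ) ∧
      ψ (OtoK (a * p₀) / OtoK ϖ ^ k) ≠ 1 := by
  have hq : (1:ℝ) < (Fintype.card Fq : ℝ) := by exact_mod_cast Fintype.one_lt_card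
  set d := ϖ.natDegree with hdd
  have hd : 1 ≤ d := hirr.natDegree_pos
  have hϖ0 : ϖ ≠ 0 := hmon.ne_zero
  have hw0 : OtoK ϖ ≠ 0 := OtoK_ne_zero hϖ0
  set w := OtoK (Fq := Fq) ϖ with hww
  have hworder : w.order = -(d:ℤ) := OtoK_order hϖ0
  -- ψ 0 = 1
  have hψ0 : ψ 0 = 1 := by
    apply hψ4
    rw [Kabs, if_pos rfl]; positivity
  -- get the nontrivial character value
  obtain ⟨z, hz1, hz2⟩ := hψ5
  have hzne : z ≠ 0 := by rintro rfl; exact hz2 hψ0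
  have hzorder : 1 ≤ z.order := by
    rw [Kabs, if_neg hzne] at hz1
    have := (zpow_le_zpow_iff_right₀ hq).mp hz1
    omega
  set c₀ := z.coeff 1 with hc₀
  have hsplit : ψ z = ψ (HahnSeries.single 1 c₀) * ψ (z - HahnSeries.single 1 c₀) := by
    rw [← hψ2]; ring_nf
  have hsmallz : ψ (z - HahnSeries.single 1 c₀) = 1 := by
    apply hψ4
    apply Kabs_small
    intro j hj
    rw [HahnSeries.coeff_sub, HahnSeries.coeff_single]
    rcases lt_or_eq_of_le hj with hj1 | rfl
    · rw [HahnSeries.coeff_eq_zero_of_lt_order (by omega), if_neg (by omega), sub_zero]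
    · simp [hc₀]
  have hsingle : ψ (HahnSeries.single 1 c₀) ≠ 1 := by
    rw [hsmallz, mul_one] at hsplit
    rw [← hsplit]; exact hz2
  -- factor a
  have ha0 : a ≠ 0 := by rintro rfl; exact ha (dvd_zero _)
  obtain ⟨j, b, hb, hab⟩ := WfDvdMonoid.max_power_factor ha0 hirr
  have hjk : j < k := by
    by_contra hc
    push_neg at hc
    apply ha
    rw [hab]
    exact (pow_dvd_pow ϖ hc).mul_right b
  obtain ⟨s, t, hst⟩ := (hirr.coprime_iff_not_dvd.mpr hb)
  -- the magic polynomial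
  set Q : Fq[X] := Polynomial.C c₀ * X ^ (d - 1) with hQ
  set P : Fq[X] := Q * ϖ ^ (k - 1 - j) * t with hP
  have hpow : ϖ ^ j * ϖ ^ (k - 1 - j) = ϖ ^ (k - 1) := by
    rw [← pow_add]; congr 1; omega
  have hpowk : ϖ ^ k = ϖ ^ (k-1) * ϖ := by
    rw [← pow_succ]; congr 1; omega
  have htb : t * b = 1 - s * ϖ := by linear_combination hst
  have hap : a * P = Q * ϖ ^ (k-1) - (s * Q) * ϖ ^ k := by
    have h1 : a * P = Q * (ϖ ^ j * ϖ ^ (k-1-j)) * (t * b) := by rw [hab, hP]; ring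
    rw [hpow, htb] at h1
    rw [h1, hpowk]; ring
  -- main value computation
  have hWne : w ^ k ≠ 0 := pow_ne_zero _ hw0
  have hdiv : OtoK (a * P) / w ^ k = OtoK Q / w + OtoK (-(s * Q)) := by
    have e1 : OtoK (Q * ϖ ^ (k-1)) = OtoK Q * w ^ (k-1) := by rw [hww]; simp
    have e2 : OtoK (s * Q * ϖ ^ k) = OtoK (s * Q) * w ^ k := by rw [hww]; simp
    rw [hap, map_sub, e1, e2, map_neg]
    have hwk : w ^ k = w ^ (k-1) * w := by rw [← pow_succ]; congr 1; omega
    rw [hwk]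
    field_simp
    ring
  -- compute ψ (OtoK Q / w)
  set z' : LaurentSeries Fq := OtoK Q / w - HahnSeries.single 1 c₀ with hz'
  have hNcoeff : ∀ i : ℤ, i ≤ 1 - (d:ℤ) →
      (OtoK Q - HahnSeries.single 1 c₀ * w).coeff i = 0 := by
    intro i hi
    have hQm : Q = monomial (d-1) c₀ := by
      rw [hQ, Polynomial.C_mul_X_pow_eq_monomial]
    rw [HahnSeries.coeff_sub, hQm, OtoK_monomial]
    have h2 : (HahnSeries.single (1:ℤ) c₀ * w).coeff i = c₀ * w.coeff (i - 1) := by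
      have h3 := HahnSeries.coeff_single_mul_add (r := c₀) (x := w) (a := i - 1) (b := (1:ℤ))
      have h4 : i - 1 + 1 = i := by ring
      rw [h4] at h3
      exact h3
    rw [h2, HahnSeries.coeff_single, hww, OtoK_coeff]
    rcases eq_or_lt_of_le hi with rfl | hilt
    · rw [if_pos (by omega), if_pos (by omega)]
      have : ((-(1 - (d:ℤ) - 1)).toNat) = d := by omega
      rw [this]
      have : ϖ.coeff d = 1 := hmon
      rw [this, mul_one]
      ring
    · rw [if_neg (by omega)]
      rw [if_pos (by omega)]
      rw [Polynomial.coeff_eq_zero_of_natDegree_lt (by omega)]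
      ring
  have hz'small : Kabs z' ≤ (Fintype.card Fq : ℝ) ^ (-2 : ℤ) := by
    apply Kabs_small_order
    set N : LaurentSeries Fq := OtoK Q - HahnSeries.single 1 c₀ * w with hN
    have hz'N : z' = N / w := by
      rw [hz', hN, sub_div, mul_div_cancel_right₀ _ hw0]
    rcases eq_or_ne N 0 with hN0 | hN0
    · left; rw [hz'N, hN0, zero_div]
    · right
      have hNorder : 2 - (d:ℤ) ≤ N.order := by
        by_contra hc
        push_neg at hc
        exact HahnSeries.coeff_order_eq_zero.not.mpr hN0 (hNcoeff _ (by omega))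
      have hz'ne : z' ≠ 0 := by
        rw [hz'N]
        exact div_ne_zero hN0 hw0
      have : N = z' * w := by rw [hz'N, div_mul_cancel₀ _ hw0]
      have horder : N.order = z'.order + w.order := by
        rw [this, HahnSeries.order_mul hz'ne hw0]
      omega
  have hQval : ψ (OtoK Q / w) ≠ 1 := by
    have : OtoK Q / w = HahnSeries.single 1 c₀ + z' := by rw [hz']; ring
    rw [this, hψ2, hψ4 _ hz'small, mul_one]
    exact hsingle
  have hPval : ψ (OtoK (a * P) / w ^ k) ≠ 1 := by
    rw [hdiv, hψ2, hψ3, mul_one]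
    exact hQval
  -- reduce mod ϖ^k
  refine ⟨P %ₘ ϖ ^ k, ?_, ?_⟩
  · have h1 := Polynomial.degree_modByMonic_lt P (hmon.pow k)
    have h2 : (ϖ ^ k).degree = ((k * d : ℕ) : WithBot ℕ) := by
      rw [Polynomial.degree_eq_natDegree (pow_ne_zero _ hϖ0), Polynomial.natDegree_pow]
    rwa [h2] at h1
  · have hmod : P = ϖ ^ k * (P /ₘ ϖ ^ k) + P %ₘ ϖ ^ k := by
      conv_lhs => rw [← Polynomial.modByMonic_add_div P (ϖ ^ k)]
      ring
    intro hcontra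
    apply hPval
    have : a * P = a * (P %ₘ ϖ ^ k) + (a * (P /ₘ ϖ ^ k)) * ϖ ^ k := by
      conv_lhs => rw [hmod]
      ring
    have e3 : OtoK ((a * (P /ₘ ϖ ^ k)) * ϖ ^ k) = OtoK (a * (P /ₘ ϖ ^ k)) * w ^ k := by
      rw [hww]; simp
    rw [this, map_add, add_div, e3, mul_div_cancel_right₀ _ hWne, hψ2, hcontra, hψ3, one_mul]

lemma psi_prod {ι : Type} (ψ : LaurentSeries Fq → ℂ) (hψ0 : ψ 0 = 1)
    (hψ2 : ∀ x y, ψ (x + y) = ψ x * ψ y) (s : Finset ι) (g : ι → LaurentSeries Fq) :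
    ψ (∑ i ∈ s, g i) = ∏ i ∈ s, ψ (g i) := by
  induction s using Finset.induction_on with
  | empty => simpa using hψ0
  | insert a s' hni ih => rw [Finset.sum_insert hni, Finset.prod_insert hni, hψ2, ih]

lemma gauss_inner_zero (ϖ : Fq[X]) (hmon : ϖ.Monic) (hirr : Irreducible ϖ) (k : ℕ) (hk : 1 ≤ k)
    (ψ : LaurentSeries Fq → ℂ)
    (hψ2 : ∀ x y, ψ (x + y) = ψ x * ψ y)
    (hψ3 : ∀ p : Fq[X], ψ (OtoK p) = 1)
    (hψ4 : ∀ x, Kabs x ≤ (Fintype.card Fq : ℝ) ^ (-2 : ℤ) → ψ x = 1)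
    (hψ5 : ∃ x, Kabs x ≤ (Fintype.card Fq : ℝ) ^ (-1 : ℤ) ∧ ψ x ≠ 1)
    (B : Finset Fq[X])
    (hB : ∀ p : Fq[X], p ∈ B ↔ p.degree < ((k * ϖ.natDegree : ℕ) : WithBot ℕ))
    {a : Fq[X]} (ha : ¬ ϖ^k ∣ a) :
    ∑ p ∈ B, ψ (OtoK (a * p) / OtoK ϖ ^ k) = 0 := by
  obtain ⟨p₀, hp₀deg, hp₀⟩ := key_nontrivial ϖ hmon hirr k hk ψ hψ2 hψ3 hψ4 hψ5 ha
  set φ : Fq[X] → ℂ := fun p => ψ (OtoK (a * p) / OtoK ϖ ^ k) with hφ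
  have hhom : ∀ p r : Fq[X], φ (p + r) = φ p * φ r := by
    intro p r
    rw [hφ]
    simp only
    rw [← hψ2, mul_add, map_add, add_div]
  have htrans : ∑ p ∈ B, φ p = ∑ p ∈ B, φ (p + p₀) := by
    apply Finset.sum_nbij' (i := fun p => p - p₀) (j := fun p => p + p₀)
    · intro p hp
      rw [hB] at hp ⊢
      calc (p - p₀).degree ≤ max p.degree p₀.degree := Polynomial.degree_sub_le p p₀
        _ < _ := max_lt hp hp₀deg
    · intro p hp
      rw [hB] at hp ⊢
      calc (p + p₀).degree ≤ max p.degree p₀.degree := Polynomial.degree_add_le p p₀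
        _ < _ := max_lt hp hp₀deg
    · intro p _; ring
    · intro p _; ring
    · intro p _; congr 1; ring
  have htrans2 : ∑ p ∈ B, φ (p + p₀) = (∑ p ∈ B, φ p) * φ p₀ := by
    rw [Finset.sum_mul]
    exact Finset.sum_congr rfl fun p _ => hhom p p₀
  have : ∑ p ∈ B, φ p = (∑ p ∈ B, φ p) * φ p₀ := htrans.trans htrans2
  have h0 : (∑ p ∈ B, φ p) * (φ p₀ - 1) = 0 := by
    rw [mul_sub, ← this, mul_one, sub_self]
  rcases mul_eq_zero.mp h0 with h | h
  · exact h
  · exact absurd (by linear_combination h) hp₀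

/-- Squaring bound for complete quadratic exponential sums: for a quadratic polynomial
`f(x) = xᵀMx + u·x + m` and a monic irreducible `ϖ`,
`|Σ_{|x|<|ϖ|^k} ψ(f(x)/ϖ^k)| ≤ |ϖ|^{nk/2}·√(#{x mod ϖ^k : ϖ^k ∣ Mx})`. -/
theorem stmt_4 (Fq : Type) [Field Fq] [Fintype Fq] (hodd : Odd (Fintype.card Fq))
    (n : ℕ) (hn : 1 ≤ n)
    (M : Matrix (Fin n) (Fin n) Fq[X]) (hM : M.IsSymm)
    (u : Fin n → Fq[X]) (m : Fq[X])
    (ϖ : Fq[X]) (hmon : ϖ.Monic) (hirr : Irreducible ϖ)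
    (k : ℕ) (hk : 1 ≤ k)
    (ψ : LaurentSeries Fq → ℂ)
    (hψ1 : ∀ x, ‖ψ x‖ = 1)
    (hψ2 : ∀ x y, ψ (x + y) = ψ x * ψ y)
    (hψ3 : ∀ p : Fq[X], ψ (OtoK p) = 1)
    (hψ4 : ∀ x, Kabs x ≤ (Fintype.card Fq : ℝ) ^ (-2 : ℤ) → ψ x = 1)
    (hψ5 : ∃ x, Kabs x ≤ (Fintype.card Fq : ℝ) ^ (-1 : ℤ) ∧ ψ x ≠ 1) :
    ‖(∑ᶠ x ∈ {x : Fin n → Fq[X] | ∀ i, Oabs (x i) < Oabs ϖ ^ k},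
        ψ (OtoK (x ⬝ᵥ M.mulVec x + u ⬝ᵥ x + m) / OtoK ϖ ^ k))‖
    ≤ Oabs ϖ ^ (((n : ℝ) * (k : ℝ)) / 2) *
        Real.sqrt (({x : Fin n → Fq[X] |
          (∀ i, Oabs (x i) < Oabs ϖ ^ k) ∧ ∀ i, ϖ ^ k ∣ M.mulVec x i}.ncard : ℝ)) := by
  have hq1 : (1:ℝ) < (Fintype.card Fq : ℝ) := by exact_mod_cast Fintype.one_lt_card
  have hq0 : (0:ℝ) < (Fintype.card Fq : ℝ) := by linarith
  set q : ℕ := Fintype.card Fq with hqdef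
  set d : ℕ := ϖ.natDegree with hddef
  have hd : 1 ≤ d := hirr.natDegree_pos
  set D : ℕ := k * d with hDdef
  have hϖ0 : ϖ ≠ 0 := hmon.ne_zero
  -- the box finset
  set B : Finset Fq[X] :=
    Finset.image (fun v : Fin D → Fq => ∑ i : Fin D, Polynomial.monomial (i:ℕ) (v i))
      Finset.univ with hBdef
  have hBmem : ∀ p : Fq[X], p ∈ B ↔ p.degree < (D : WithBot ℕ) := by
    intro p
    constructor
    · intro hp
      rw [hBdef, Finset.mem_image] at hp
      obtain ⟨v, _, rfl⟩ := hp
      refine lt_of_le_of_lt (Polynomial.degree_sum_le _ _) ?_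
      refine (Finset.sup_lt_iff (WithBot.bot_lt_coe D)).mpr ?_
      intro i _
      exact lt_of_le_of_lt (Polynomial.degree_monomial_le _ _) (WithBot.coe_lt_coe.mpr i.2)
    · intro hp
      rw [hBdef, Finset.mem_image]
      by_cases hp0 : p = 0
      · exact ⟨fun _ => 0, Finset.mem_univ _, by simp [hp0]⟩
      · refine ⟨fun i => p.coeff i, Finset.mem_univ _, ?_⟩
        have hnd : p.natDegree < D := by
          rwa [Polynomial.natDegree_lt_iff_degree_lt hp0]
        rw [Fin.sum_univ_eq_sum_range (fun i => Polynomial.monomial i (p.coeff i)) D]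
        exact (p.as_sum_range' D hnd).symm
  have hBcard : (B.card : ℝ) ≤ (q:ℝ) ^ D := by
    have h1 : B.card ≤ q ^ D := by
      refine le_trans Finset.card_image_le (le_of_eq ?_)
      rw [Finset.card_univ, Fintype.card_fun, Fintype.card_fin]
    exact_mod_cast h1
  have hOabsϖ : Oabs ϖ = (q:ℝ) ^ d := by rw [Oabs, if_neg hϖ0]
  have hOabs_iff : ∀ p : Fq[X], Oabs p < Oabs ϖ ^ k ↔ p ∈ B := by
    intro p
    rw [hBmem, hOabsϖ, ← pow_mul, Nat.mul_comm d k]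
    by_cases hp0 : p = 0
    · subst hp0
      simp only [Oabs, if_pos rfl, Polynomial.degree_zero]
      constructor
      · intro _; exact WithBot.bot_lt_coe D
      · intro _; positivity
    · rw [Oabs, if_neg hp0, ← Polynomial.natDegree_lt_iff_degree_lt hp0]
      exact pow_lt_pow_iff_right₀ hq1
  set T : Finset (Fin n → Fq[X]) := Fintype.piFinset (fun _ => B) with hTdef
  have hTmem : ∀ x : Fin n → Fq[X], x ∈ T ↔ ∀ i, x i ∈ B := by
    intro x; rw [hTdef]; exact Fintype.mem_piFinset
  have hsetT : {x : Fin n → Fq[X] | ∀ i, Oabs (x i) < Oabs ϖ ^ k} = ↑T := by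
    ext x
    simp only [Set.mem_setOf_eq, Finset.mem_coe]
    rw [hTmem]
    exact forall_congr' fun i => hOabs_iff (x i)
  rw [hsetT, finsum_mem_coe_finset]
  -- notation
  set W : LaurentSeries Fq := OtoK ϖ ^ k with hWdef
  have hW0 : W ≠ 0 := pow_ne_zero _ (OtoK_ne_zero hϖ0)
  set f : (Fin n → Fq[X]) → Fq[X] := fun x => x ⬝ᵥ M.mulVec x + u ⬝ᵥ x + m with hfdef
  set F : (Fin n → Fq[X]) → ℂ := fun x => ψ (OtoK (f x) / W) with hFdef
  have hchange : ‖(∑ x ∈ T, ψ (OtoK (x ⬝ᵥ M.mulVec x + u ⬝ᵥ x + m) / W))‖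
      = ‖(∑ x ∈ T, F x)‖ := rfl
  rw [hchange]
  -- character basics
  have hψ0 : ψ 0 = 1 := hψ4 0 (by rw [Kabs, if_pos rfl]; positivity)
  have hconj : ∀ z, (starRingEnd ℂ) (ψ z) = ψ (-z) := by
    intro z
    have h1 : ψ z * ψ (-z) = 1 := by rw [← hψ2]; simp [hψ0]
    have h2 : (starRingEnd ℂ) (ψ z) * ψ z = 1 := by
      rw [mul_comm, Complex.mul_conj]
      rw [Complex.normSq_eq_norm_sq, hψ1]
      norm_num
    calc (starRingEnd ℂ) (ψ z) = (starRingEnd ℂ) (ψ z) * (ψ z * ψ (-z)) := by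
          rw [h1, mul_one]
      _ = ((starRingEnd ℂ) (ψ z) * ψ z) * ψ (-z) := by ring
      _ = ψ (-z) := by rw [h2, one_mul]
  -- symmetric matrix facts
  have hsd : ∀ v w1 : Fin n → Fq[X], v ⬝ᵥ M.mulVec w1 = M.mulVec v ⬝ᵥ w1 := by
    intro v w1
    rw [Matrix.dotProduct_mulVec, ← Matrix.mulVec_transpose, hM.eq]
  set g : (Fin n → Fq[X]) → Fq[X] := fun h1 => h1 ⬝ᵥ M.mulVec h1 + u ⬝ᵥ h1 with hgdef
  set c : (Fin n → Fq[X]) → Fin n → Fq[X] := fun h1 i => 2 * M.mulVec h1 i with hcdef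
  have halg : ∀ y h1 : Fin n → Fq[X],
      f (y + h1) = f y + g h1 + c h1 ⬝ᵥ y := by
    intro y h1
    have e1 : c h1 ⬝ᵥ y = 2 * (M.mulVec h1 ⬝ᵥ y) := by
      simp [hcdef, dotProduct, Finset.mul_sum, mul_assoc]
    have e2 : y ⬝ᵥ M.mulVec h1 = M.mulVec h1 ⬝ᵥ y := dotProduct_comm _ _
    have e3 : h1 ⬝ᵥ M.mulVec y = M.mulVec h1 ⬝ᵥ y := hsd h1 y
    show (y + h1) ⬝ᵥ M.mulVec (y + h1) + u ⬝ᵥ (y + h1) + m = _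
    rw [Matrix.mulVec_add, dotProduct_add, add_dotProduct, add_dotProduct,
      dotProduct_add, e1, e2, e3]
    simp only [hfdef, hgdef]
    ring
  -- closure of T
  have hBsub : ∀ p r : Fq[X], p ∈ B → r ∈ B → p - r ∈ B := by
    intro p r hp hr
    rw [hBmem] at hp hr ⊢
    calc (p - r).degree ≤ max p.degree r.degree := Polynomial.degree_sub_le p r
      _ < _ := max_lt hp hr
  have hBadd : ∀ p r : Fq[X], p ∈ B → r ∈ B → p + r ∈ B := by
    intro p r hp hr
    rw [hBmem] at hp hr ⊢
    calc (p + r).degree ≤ max p.degree r.degree := Polynomial.degree_add_le p r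
      _ < _ := max_lt hp hr
  have hTsub : ∀ x y : Fin n → Fq[X], x ∈ T → y ∈ T → x - y ∈ T := by
    intro x y hx hy
    rw [hTmem] at hx hy ⊢
    intro i
    exact hBsub _ _ (hx i) (hy i)
  have hTadd : ∀ x y : Fin n → Fq[X], x ∈ T → y ∈ T → x + y ∈ T := by
    intro x y hx hy
    rw [hTmem] at hx hy ⊢
    intro i
    exact hBadd _ _ (hx i) (hy i)
  -- the inner geometric sums
  set G : Fq[X] → ℂ := fun a => ∑ p ∈ B, ψ (OtoK (a * p) / W) with hGdef
  have hBmem' : ∀ p : Fq[X], p ∈ B ↔ p.degree < ((k * ϖ.natDegree : ℕ) : WithBot ℕ) := hBmem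
  have hG0 : ∀ a : Fq[X], ¬ ϖ^k ∣ a → G a = 0 := by
    intro a ha
    exact gauss_inner_zero ϖ hmon hirr k hk ψ hψ2 hψ3 hψ4 hψ5 B hBmem' ha
  have habsG : ∀ a : Fq[X], ‖G a‖ ≤ (q:ℝ) ^ D := by
    intro a
    refine le_trans (norm_sum_le _ _) ?_
    refine le_trans (le_of_eq (Finset.sum_congr rfl fun p _ => hψ1 _)) ?_
    rw [Finset.sum_const, nsmul_eq_mul, mul_one]
    exact hBcard
  -- conjugation identity
  have hFmul : ∀ x y : Fin n → Fq[X],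
      F x * (starRingEnd ℂ) (F y) = ψ (OtoK (f x - f y) / W) := by
    intro x y
    show ψ (OtoK (f x) / W) * (starRingEnd ℂ) (ψ (OtoK (f y) / W)) = _
    rw [hconj, ← hψ2, map_sub, sub_div, ← sub_eq_add_neg]
  have hinner : ∀ y ∈ T, ∑ x ∈ T, ψ (OtoK (f x - f y) / W)
      = ∑ h1 ∈ T, ψ (OtoK (g h1 + c h1 ⬝ᵥ y) / W) := by
    intro y hy
    apply Finset.sum_nbij' (i := fun x => x - y) (j := fun h1 => y + h1)
    · intro x hx; exact hTsub x y hx hy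
    · intro h1 hh1; exact hTadd y h1 hy hh1
    · intro x _; ring
    · intro h1 _; ring
    · intro x _
      have h5 := halg y (x - y)
      rw [show y + (x - y) = x by ring] at h5
      have h6 : f x - f y = g (x - y) + c (x - y) ⬝ᵥ y := by linear_combination h5
      rw [h6]
  have hSconj : (∑ x ∈ T, F x) * (starRingEnd ℂ) (∑ x ∈ T, F x)
      = ∑ h1 ∈ T, (ψ (OtoK (g h1) / W) * ∏ i, G (c h1 i)) := by
    rw [map_sum, Finset.sum_mul_sum]
    calc ∑ x ∈ T, ∑ y ∈ T, F x * (starRingEnd ℂ) (F y)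
        = ∑ y ∈ T, ∑ x ∈ T, ψ (OtoK (f x - f y) / W) := by
          rw [Finset.sum_comm]
          exact Finset.sum_congr rfl fun y _ => Finset.sum_congr rfl fun x _ => hFmul x y
      _ = ∑ y ∈ T, ∑ h1 ∈ T, ψ (OtoK (g h1 + c h1 ⬝ᵥ y) / W) :=
          Finset.sum_congr rfl hinner
      _ = ∑ h1 ∈ T, ∑ y ∈ T, ψ (OtoK (g h1 + c h1 ⬝ᵥ y) / W) := Finset.sum_comm
      _ = ∑ h1 ∈ T, (ψ (OtoK (g h1) / W) * ∏ i, G (c h1 i)) := by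
          refine Finset.sum_congr rfl fun h1 _ => ?_
          have e4 : ∀ y, ψ (OtoK (g h1 + c h1 ⬝ᵥ y) / W)
              = ψ (OtoK (g h1) / W) * ψ (OtoK (c h1 ⬝ᵥ y) / W) := by
            intro y
            rw [map_add, add_div, hψ2]
          calc ∑ y ∈ T, ψ (OtoK (g h1 + c h1 ⬝ᵥ y) / W)
              = ψ (OtoK (g h1) / W) * ∑ y ∈ T, ψ (OtoK (c h1 ⬝ᵥ y) / W) := by
                rw [Finset.mul_sum]
                exact Finset.sum_congr rfl fun y _ => e4 y
            _ = ψ (OtoK (g h1) / W) * ∏ i, G (c h1 i) := by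
                congr 1
                calc ∑ y ∈ T, ψ (OtoK (c h1 ⬝ᵥ y) / W)
                    = ∑ y ∈ T, ∏ i, ψ (OtoK (c h1 i * y i) / W) := by
                      refine Finset.sum_congr rfl fun y _ => ?_
                      rw [show (c h1 ⬝ᵥ y) = ∑ i, c h1 i * y i from rfl, map_sum,
                        Finset.sum_div, psi_prod ψ hψ0 hψ2]
                  _ = ∏ i, G (c h1 i) :=
                      (Finset.prod_univ_sum (fun _ => B)
                        (fun i p => ψ (OtoK (c h1 i * p) / W))).symm
  -- 2 is invertible
  have h2ne : (2 : Fq) ≠ 0 := by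
    intro h2
    haveI := ringChar.charP Fq
    have h3 : ringChar Fq ∣ 2 :=
      (CharP.cast_eq_zero_iff Fq (ringChar Fq) 2).mp (by exact_mod_cast h2)
    have h4 : ringChar Fq ∣ Fintype.card Fq :=
      (CharP.cast_eq_zero_iff Fq (ringChar Fq) _).mp (FiniteField.cast_card_eq_zero Fq)
    rcases (Nat.prime_two.eq_one_or_self_of_dvd _ h3) with h5 | h5
    · exact CharP.ringChar_ne_one h5
    · rw [h5] at h4
      exact (Nat.not_even_iff_odd.mpr hodd) (even_iff_two_dvd.mpr h4)
  obtain ⟨iv, hiv⟩ : ∃ iv : Fq[X], 2 * iv = 1 := by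
    refine ⟨Polynomial.C (2⁻¹ : Fq), ?_⟩
    have : (2 : Fq[X]) = Polynomial.C (2 : Fq) := (map_ofNat Polynomial.C 2).symm
    rw [this, ← Polynomial.C_mul, mul_inv_cancel₀ h2ne, Polynomial.C_1]
  have h2dvd : ∀ v : Fq[X], ϖ^k ∣ 2 * v ↔ ϖ^k ∣ v := by
    intro v
    constructor
    · rintro ⟨r, hr⟩
      exact ⟨iv * r, by linear_combination iv * hr - v * hiv⟩
    · exact fun h => h.mul_left 2
  -- termwise bound
  set cond : (Fin n → Fq[X]) → Prop := fun h1 => ∀ i, ϖ^k ∣ M.mulVec h1 i with hconddef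
  have hterm : ∀ h1 ∈ T, ‖ψ (OtoK (g h1) / W) * ∏ i, G (c h1 i)‖
      ≤ if cond h1 then ((q:ℝ)^D)^n else 0 := by
    intro h1 _
    rw [norm_mul, hψ1, one_mul]
    by_cases hc : cond h1
    · rw [if_pos hc, norm_prod]
      refine le_trans (Finset.prod_le_prod (fun _ _ => norm_nonneg _)
        (fun i _ => habsG (c h1 i))) ?_
      rw [Finset.prod_const, Finset.card_univ, Fintype.card_fin]
    · rw [if_neg hc]
      simp only [hconddef, not_forall] at hc
      obtain ⟨i0, hi0⟩ := hc
      have hzero : G (c h1 i0) = 0 := by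
        apply hG0
        rw [hcdef]
        simp only
        rw [h2dvd]
        exact hi0
      rw [Finset.prod_eq_zero (Finset.mem_univ i0) hzero]
      simp
  -- square bound
  have hsq : ‖∑ x ∈ T, F x‖^2
      ≤ ((q:ℝ)^D)^n * ((T.filter cond).card : ℝ) := by
    have habs2 : ‖∑ x ∈ T, F x‖^2
        = ‖(∑ x ∈ T, F x) * (starRingEnd ℂ) (∑ x ∈ T, F x)‖ := by
      rw [norm_mul, Complex.norm_conj, sq]
    rw [habs2, hSconj]
    refine le_trans (norm_sum_le _ _) ?_
    refine le_trans (Finset.sum_le_sum hterm) ?_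
    rw [← Finset.sum_filter]
    rw [Finset.sum_const, nsmul_eq_mul]
    rw [mul_comm]
  -- identify the cardinality
  have hrhs : ({x : Fin n → Fq[X] |
      (∀ i, Oabs (x i) < Oabs ϖ ^ k) ∧ ∀ i, ϖ ^ k ∣ M.mulVec x i}.ncard : ℝ)
      = ((T.filter cond).card : ℝ) := by
    congr 1
    rw [← Set.ncard_coe_finset]
    congr 1
    ext x
    simp only [Set.mem_setOf_eq, Finset.coe_filter, hTmem, hconddef]
    constructor
    · rintro ⟨h1, h2⟩
      exact ⟨fun i => (hOabs_iff (x i)).mp (h1 i), h2⟩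
    · rintro ⟨h1, h2⟩
      exact ⟨fun i => (hOabs_iff (x i)).mpr (h1 i), h2⟩
  rw [hrhs]
  -- final arithmetic
  have hsqrt : Oabs ϖ ^ (((n : ℝ) * (k : ℝ)) / 2) = Real.sqrt (((q:ℝ)^D)^n) := by
    rw [hOabsϖ, ← pow_mul, Real.sqrt_eq_rpow, ← Real.rpow_natCast ((q:ℝ)) (D*n),
      ← Real.rpow_natCast ((q:ℝ)) d, ← Real.rpow_mul hq0.le, ← Real.rpow_mul hq0.le]
    congr 1
    rw [hDdef]
    push_cast
    ring
  have hpos : (0:ℝ) ≤ ((q:ℝ)^D)^n := pow_nonneg (pow_nonneg hq0.le D) n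
  rw [hsqrt, ← Real.sqrt_mul hpos]
  exact (Real.le_sqrt (norm_nonneg _) (mul_nonneg hpos (Nat.cast_nonneg _))).mpr hsq
end
end

section
/- Let r ∈ O be monic and a = (a1,a2) ∈ O² with |a| < |r| and gcd(a1,a2,r) = 1. Then there exist a primitive pair c = (c1,c2) ∈ O², a monic d ∈ O, and k ∈ O such that |d·c1| ≤ |r|^{1/2}, |d·c2| < |r|^{1/2}, d(c1·a1 + c2·a2) = k·r, and gcd(d,k) = 1 (i.e., a/r lies on the generalised line L(d·c)). -/
set_option autoImplicit false

noncomputable section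

open Polynomial Matrix
open scoped Classical

variable {Fq : Type} [Field Fq] [Fintype Fq]

/-- Reduction lemma: from `d·m = k·r` with `d` monic, one can pass to a monic divisor
`d'` of `d` with `d'·m = k'·r` and `gcd(d',k') = 1`. -/
lemma reduce_aux (r : Fq[X]) : ∀ (N : ℕ) (d k m : Fq[X]), d.natDegree ≤ N → d.Monic →
    d * m = k * r → ∃ d' k', d' ∣ d ∧ d'.Monic ∧ d' * m = k' * r ∧ IsCoprime d' k' := by
  intro N
  induction N with
  | zero =>
    intro d k m hN hd heq
    have hd1 : d = 1 := hd.natDegree_eq_zero.1 (Nat.le_zero.1 hN)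
    exact ⟨d, k, dvd_rfl, hd, heq, hd1 ▸ isCoprime_one_left⟩
  | succ N ih =>
    intro d k m hN hd heq
    by_cases hck : IsCoprime d k
    · exact ⟨d, k, dvd_rfl, hd, heq, hck⟩
    · set g := gcd d k with hg
      have hgu : ¬ IsUnit g := fun h => hck ((gcd_isUnit_iff d k).1 h)
      have hg0 : g ≠ 0 := fun h => hd.ne_zero ((gcd_eq_zero_iff d k).1 h).1
      have hgm : g.Monic := by
        have := monic_normalize (p := g) hg0; rwa [hg, normalize_gcd] at this
      obtain ⟨d1, hd1⟩ : g ∣ d := gcd_dvd_left d k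
      obtain ⟨k1, hk1⟩ : g ∣ k := gcd_dvd_right d k
      have hd1m : d1.Monic := hgm.of_mul_monic_left (hd1 ▸ hd)
      have hgdeg : 1 ≤ g.natDegree := by
        rcases Nat.eq_zero_or_pos g.natDegree with h | h
        · exact absurd (hgm.natDegree_eq_zero.1 h ▸ isUnit_one) hgu
        · exact h
      have hdeg : d1.natDegree ≤ N := by
        have := natDegree_mul hg0 hd1m.ne_zero
        rw [← hd1] at this
        omega
      have heq1 : d1 * m = k1 * r := by
        apply mul_left_cancel₀ hg0
        rw [← mul_assoc, ← hd1, heq, hk1, mul_assoc]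
      obtain ⟨d', k', hdvd, hm, he, hc⟩ := ih d1 k1 m hdeg hd1m heq1
      exact ⟨d', k', hdvd.trans (Dvd.intro_left g hd1.symm), hm, he, hc⟩

/-- Pigeonhole: there is a nonzero short vector `(u,v)` with `r ∣ u·a₁ + v·a₂`. -/
lemma pigeon (r : Fq[X]) (hr : r.Monic) (a1 a2 : Fq[X]) :
    ∃ u v : Fq[X], ¬(u = 0 ∧ v = 0) ∧ r ∣ (u * a1 + v * a2) ∧
      2 * u.natDegree ≤ r.natDegree ∧ (v ≠ 0 → 2 * v.natDegree < r.natDegree) := by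
  set n := r.natDegree with hn
  haveI h1 : FiniteDimensional Fq (degreeLT Fq (n/2+1)) :=
    Module.Finite.equiv (degreeLTEquiv Fq (n/2+1)).symm
  haveI h2 : FiniteDimensional Fq (degreeLT Fq ((n+1)/2)) :=
    Module.Finite.equiv (degreeLTEquiv Fq ((n+1)/2)).symm
  haveI h3 : FiniteDimensional Fq (degreeLT Fq n) :=
    Module.Finite.equiv (degreeLTEquiv Fq n).symm
  have hrd : r.degree = (n : ℕ) := degree_eq_natDegree hr.ne_zero
  have hmem : ∀ p : Fq[X], (p %ₘ r) ∈ degreeLT Fq n := by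
    intro p
    rw [mem_degreeLT, ← hrd]
    exact degree_modByMonic_lt p hr
  set φ : (degreeLT Fq (n/2+1) × degreeLT Fq ((n+1)/2)) →ₗ[Fq] degreeLT Fq n :=
    { toFun := fun x => ⟨((x.1 : Fq[X]) * a1 + (x.2 : Fq[X]) * a2) %ₘ r, hmem _⟩
      map_add' := by
        intro x y
        apply Subtype.ext
        simp [add_mul, add_modByMonic]
        ring_nf
      map_smul' := by
        intro c x
        apply Subtype.ext
        simp [smul_mul_assoc, ← smul_add, smul_modByMonic] } with hφ
  have hker : LinearMap.ker φ ≠ ⊥ := by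
    intro hk
    have hinj := LinearMap.ker_eq_bot.1 hk
    have := LinearMap.finrank_le_finrank_of_injective hinj
    rw [Module.finrank_prod] at this
    have e1 : Module.finrank Fq (degreeLT Fq (n/2+1)) = n/2+1 := by
      rw [(degreeLTEquiv Fq _).finrank_eq]; simp
    have e2 : Module.finrank Fq (degreeLT Fq ((n+1)/2)) = (n+1)/2 := by
      rw [(degreeLTEquiv Fq _).finrank_eq]; simp
    have e3 : Module.finrank Fq (degreeLT Fq n) = n := by
      rw [(degreeLTEquiv Fq _).finrank_eq]; simp
    rw [e1, e2, e3] at this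
    omega
  obtain ⟨x, hxmem, hxne⟩ := Submodule.ne_bot_iff _ |>.1 hker
  refine ⟨x.1, x.2, ?_, ?_, ?_, ?_⟩
  · rintro ⟨h1, h2⟩
    apply hxne
    apply Prod.ext <;> apply Subtype.ext <;> assumption
  · have := LinearMap.mem_ker.1 hxmem
    have h0 : ((x.1 : Fq[X]) * a1 + (x.2 : Fq[X]) * a2) %ₘ r = 0 := congrArg Subtype.val this
    exact (modByMonic_eq_zero_iff_dvd hr).1 h0
  · rcases eq_or_ne (x.1 : Fq[X]) 0 with h | h
    · simp [h]
    · have := (natDegree_lt_iff_degree_lt h).2 (mem_degreeLT.1 x.1.2)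
      omega
  · intro h
    have := (natDegree_lt_iff_degree_lt h).2 (mem_degreeLT.1 x.2.2)
    omega

lemma one_lt_q : (1 : ℝ) < (Fintype.card Fq : ℝ) := by
  exact_mod_cast Fintype.one_lt_card

lemma Oabs_le_sqrt (x r : Fq[X]) (hr : r ≠ 0) (h : x ≠ 0 → 2 * x.natDegree ≤ r.natDegree) :
    Oabs x ≤ Real.sqrt (Oabs r) := by
  rcases eq_or_ne x 0 with hx | hx
  · simp [Oabs, hx, Real.sqrt_nonneg]
  · have hq : (1 : ℝ) < (Fintype.card Fq : ℝ) := one_lt_q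
    rw [Oabs, if_neg hx, Oabs, if_neg hr,
      Real.le_sqrt' (pow_pos (lt_trans one_pos hq) _)]
    rw [← pow_mul]
    exact pow_le_pow_right₀ hq.le (by have := h hx; omega)

lemma Oabs_lt_sqrt (x r : Fq[X]) (hr : r ≠ 0) (h : x ≠ 0 → 2 * x.natDegree < r.natDegree) :
    Oabs x < Real.sqrt (Oabs r) := by
  have hq : (1 : ℝ) < (Fintype.card Fq : ℝ) := one_lt_q
  rcases eq_or_ne x 0 with hx | hx
  · rw [Oabs, if_pos hx]
    exact Real.sqrt_pos.2 (by rw [Oabs, if_neg hr]; exact pow_pos (lt_trans one_pos hq) _)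
  · rw [Oabs, if_neg hx, Oabs, if_neg hr,
      Real.lt_sqrt (le_of_lt (pow_pos (lt_trans one_pos hq) _))]
    rw [← pow_mul]
    exact pow_lt_pow_right₀ hq (by have := h hx; omega)

/-- Every rational point `a/r` in the unit square lies on a generalised line `L(d·c)`
of height at most `|r|^{1/2}`. -/
theorem stmt_9 (Fq : Type) [Field Fq] [Fintype Fq]
    (r : Fq[X]) (hr : r.Monic)
    (a : Fq[X] × Fq[X]) (ha : Oabs2 a < Oabs r) (hco : CoprimeTriple a.1 a.2 r) :
    ∃ c : Fq[X] × Fq[X], ∃ d : Fq[X], ∃ k : Fq[X],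
      Primitive c ∧ d.Monic ∧
      Oabs (d * c.1) ≤ Real.sqrt (Oabs r) ∧
      Oabs (d * c.2) < Real.sqrt (Oabs r) ∧
      d * (c.1 * a.1 + c.2 * a.2) = k * r ∧ IsCoprime d k := by
  obtain ⟨u, v, huv, hdvd, hu, hv⟩ := pigeon r hr a.1 a.2
  rcases eq_or_ne u 0 with hu0 | hu0
  · -- u = 0 : take c = (0, 1), d = monic multiple of v
    have hv0 : v ≠ 0 := fun h => huv ⟨hu0, h⟩
    set v' : Fq[X] := v * C v.leadingCoeff⁻¹ with hv'
    have hv'm : v'.Monic := monic_mul_leadingCoeff_inv hv0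
    have hdvd' : r ∣ v' * (0 * a.1 + 1 * a.2) := by
      rw [hu0, zero_mul, zero_add] at hdvd
      rw [zero_mul, one_mul, zero_add, hv', mul_comm v _, mul_assoc]
      exact Dvd.dvd.mul_left hdvd _
    obtain ⟨k0, hk0⟩ := hdvd'
    obtain ⟨d, k, hddvd, hdm, heq, hcop⟩ :=
      reduce_aux r v'.natDegree v' k0 (0 * a.1 + 1 * a.2) le_rfl hv'm
        (by rw [hk0, mul_comm])
    refine ⟨(0, 1), d, k, ⟨isCoprime_zero_left.2 isUnit_one, Or.inr ⟨rfl, monic_one⟩⟩,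
      hdm, ?_, ?_, heq, hcop⟩
    · simp only [mul_zero]
      exact Oabs_le_sqrt _ _ hr.ne_zero (fun h => absurd rfl h)
    · simp only [mul_one]
      apply Oabs_lt_sqrt _ _ hr.ne_zero
      intro _
      have h1 : d.natDegree ≤ v'.natDegree := natDegree_le_of_dvd hddvd hv'm.ne_zero
      have h2 : v'.natDegree ≤ v.natDegree := by
        rw [hv', mul_comm]; exact natDegree_C_mul_le _ _
      have := hv hv0
      omega
  · -- u ≠ 0 : scale so that u is monic, split off the gcd
    set u' : Fq[X] := u * C u.leadingCoeff⁻¹ with hu'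
    set v' : Fq[X] := v * C u.leadingCoeff⁻¹ with hv'
    have hu'm : u'.Monic := monic_mul_leadingCoeff_inv hu0
    have hdvd' : r ∣ u' * a.1 + v' * a.2 := by
      have : u' * a.1 + v' * a.2 = (u * a.1 + v * a.2) * C u.leadingCoeff⁻¹ := by ring
      rw [this]
      exact Dvd.dvd.mul_right hdvd _
    set g := gcd u' v' with hg
    have hg0 : g ≠ 0 := fun h => hu'm.ne_zero ((gcd_eq_zero_iff u' v').1 h).1
    have hgm : g.Monic := by
      have := monic_normalize (p := g) hg0; rwa [hg, normalize_gcd] at this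
    obtain ⟨c1, hc1⟩ : g ∣ u' := gcd_dvd_left u' v'
    obtain ⟨c2, hc2⟩ : g ∣ v' := gcd_dvd_right u' v'
    have hc1m : c1.Monic := hgm.of_mul_monic_left (hc1 ▸ hu'm)
    have hcop12 : IsCoprime c1 c2 := by
      have h : gcd (g * c1) (g * c2) = g := by rw [← hc1, ← hc2]
      rw [gcd_mul_left, hgm.normalize_eq_self] at h
      have h2 : g * gcd c1 c2 = g * 1 := by rw [h, mul_one]
      have h3 := mul_left_cancel₀ hg0 h2
      exact (gcd_isUnit_iff c1 c2).1 (h3 ▸ isUnit_one)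
    have hdvd'' : r ∣ g * (c1 * a.1 + c2 * a.2) := by
      have : g * (c1 * a.1 + c2 * a.2) = u' * a.1 + v' * a.2 := by
        rw [hc1, hc2]; ring
      rw [this]; exact hdvd'
    obtain ⟨k0, hk0⟩ := hdvd''
    obtain ⟨d, k, hddvd, hdm, heq, hcop⟩ :=
      reduce_aux r g.natDegree g k0 (c1 * a.1 + c2 * a.2) le_rfl hgm
        (by rw [hk0, mul_comm])
    refine ⟨(c1, c2), d, k, ⟨hcop12, Or.inl hc1m⟩, hdm, ?_, ?_, heq, hcop⟩
    · apply Oabs_le_sqrt _ _ hr.ne_zero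
      intro _
      show 2 * (d * c1).natDegree ≤ r.natDegree
      have hd1 : d * c1 ∣ u' := hc1 ▸ mul_dvd_mul_right hddvd c1
      have h1 : (d * c1).natDegree ≤ u'.natDegree := natDegree_le_of_dvd hd1 hu'm.ne_zero
      have h2 : u'.natDegree ≤ u.natDegree := by
        rw [hu', mul_comm]; exact natDegree_C_mul_le _ _
      omega
    · apply Oabs_lt_sqrt _ _ hr.ne_zero
      intro hdc2
      show 2 * (d * c2).natDegree < r.natDegree
      have hc20 : c2 ≠ 0 := fun h => hdc2 (by rw [h, mul_zero])
      have hv'0 : v' ≠ 0 := fun h => hc20 (by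
        have := mul_left_cancel₀ hg0 (by rw [← hc2, h, mul_zero] : g * c2 = g * 0)
        exact this)
      have hv0 : v ≠ 0 := fun h => hv'0 (by rw [hv', h, zero_mul])
      have hd1 : d * c2 ∣ v' := hc2 ▸ mul_dvd_mul_right hddvd c2
      have h1 : (d * c2).natDegree ≤ v'.natDegree := natDegree_le_of_dvd hd1 hv'0
      have h2 : v'.natDegree ≤ v.natDegree := by
        rw [hv', mul_comm]; exact natDegree_C_mul_le _ _
      have := hv hv0
      omega
end
end

section
/- Let c = (c1,c2) ∈ O² be primitive and d ∈ O monic, and write |d·c| = max(|d·c1|,|d·c2|). (i) Suppose a/r and a'/r' both lie on L(d·c), a·r' ≠ a'·r, and |d·c|² ≤ |r|·|r'|. Then |a/r − a'/r'| ≥ |d·c|/(|r|·|r'|), where the difference is the maximum over the two coordinates of the absolute value computed in F_q(t) ⊂ K_∞. (ii) Suppose a/r lies on L(d·c) with d(c1·a1 + c2·a2) = k·r, gcd(d,k) = 1, and |d·c|² ≤ |r|. Then there exist a monic r2 with |r| < |r2| and a2 ∈ O² such that a2/r2 lies on L(d·c), d(c1·(a2)₁ + c2·(a2)₂) = k·r2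 (the same k), and |a/r − a2/r2| = |d·c|/(|r|·|r2|). -/
set_option autoImplicit false
set_option linter.unusedSectionVars false
set_option linter.unusedVariables false
set_option maxHeartbeats 1000000

noncomputable section

open Polynomial Matrix
open scoped Classical

variable {Fq : Type} [Field Fq] [Fintype Fq]

/-- The embedding of `O = Fq[t]` into its fraction field `Fq(t)`. -/
def toR : Fq[X] →+* RatFunc Fq := algebraMap _ _

/-- The absolute value at infinity on `Fq(t)`: `|f| = q^{deg num f - deg denom f}`. -/
def Rabs (f : RatFunc Fq) : ℝ :=
  if f = 0 then 0 else (Fintype.card Fq : ℝ) ^ f.intDegree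


lemma one_lt_Q : (1:ℝ) < (Fintype.card Fq : ℝ) := by
  exact_mod_cast Fintype.one_lt_card

lemma Q_pos : (0:ℝ) < (Fintype.card Fq : ℝ) := lt_trans one_pos one_lt_Q

lemma Oabs_zero : Oabs (0 : Fq[X]) = 0 := by simp [Oabs]

lemma Oabs_ne (x : Fq[X]) (hx : x ≠ 0) :
    Oabs x = (Fintype.card Fq : ℝ) ^ x.natDegree := by simp [Oabs, hx]

lemma Oabs_nonneg (x : Fq[X]) : 0 ≤ Oabs x := by
  unfold Oabs; split
  · exact le_refl 0
  · positivity

lemma Oabs_pos (x : Fq[X]) (hx : x ≠ 0) : 0 < Oabs x := by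
  rw [Oabs_ne x hx]; positivity

lemma Oabs_eq_zero {x : Fq[X]} (h : Oabs x = 0) : x = 0 := by
  by_contra hx; exact absurd h (ne_of_gt (Oabs_pos x hx))

lemma one_le_Oabs (x : Fq[X]) (hx : x ≠ 0) : 1 ≤ Oabs x := by
  rw [Oabs_ne x hx]; exact one_le_pow₀ (le_of_lt one_lt_Q)

lemma Oabs_neg (x : Fq[X]) : Oabs (-x) = Oabs x := by
  unfold Oabs; simp [natDegree_neg]

lemma Oabs_mul (x y : Fq[X]) : Oabs (x * y) = Oabs x * Oabs y := by
  by_cases hx : x = 0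
  · simp [hx, Oabs_zero]
  by_cases hy : y = 0
  · simp [hy, Oabs_zero]
  rw [Oabs_ne _ (mul_ne_zero hx hy), Oabs_ne _ hx, Oabs_ne _ hy,
    natDegree_mul hx hy, pow_add]

lemma Oabs_le_Oabs {x y : Fq[X]} (hy : y ≠ 0) (h : x.natDegree ≤ y.natDegree) :
    Oabs x ≤ Oabs y := by
  by_cases hx : x = 0
  · rw [hx, Oabs_zero]; exact Oabs_nonneg y
  rw [Oabs_ne _ hx, Oabs_ne _ hy]
  exact pow_le_pow_right₀ (le_of_lt one_lt_Q) h

lemma Oabs_add_le (x y : Fq[X]) : Oabs (x + y) ≤ max (Oabs x) (Oabs y) := by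
  by_cases hxy : x + y = 0
  · rw [hxy, Oabs_zero]; exact le_max_of_le_left (Oabs_nonneg x)
  by_cases hx : x = 0
  · simp [hx]
  by_cases hy : y = 0
  · simp [hy]
  rcases le_total x.natDegree y.natDegree with h | h
  · exact le_max_of_le_right (Oabs_le_Oabs hy
      (le_trans (natDegree_add_le x y) (by omega)))
  · exact le_max_of_le_left (Oabs_le_Oabs hx
      (le_trans (natDegree_add_le x y) (by omega)))

lemma Oabs_dvd {x y : Fq[X]} (h : x ∣ y) (hy : y ≠ 0) : Oabs x ≤ Oabs y := by
  obtain ⟨z, rfl⟩ := h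
  have hx : x ≠ 0 := fun hx => hy (by simp [hx])
  have hz : z ≠ 0 := fun hz => hy (by simp [hz])
  exact Oabs_le_Oabs hy (by rw [natDegree_mul hx hz]; omega)

lemma toR_ne_zero {x : Fq[X]} (hx : x ≠ 0) : toR x ≠ 0 := by
  simpa [toR] using RatFunc.algebraMap_ne_zero hx

lemma Rabs_div (p q : Fq[X]) (hq : q ≠ 0) :
    Rabs (toR p / toR q) = Oabs p / Oabs q := by
  by_cases hp : p = 0
  · simp [hp, Rabs, Oabs_zero, toR]
  have hq' : toR q ≠ 0 := toR_ne_zero hq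
  have hp' : toR p ≠ 0 := toR_ne_zero hp
  have hf : toR p / toR q ≠ 0 := div_ne_zero hp' hq'
  have hdeg : (toR p / toR q).intDegree = (p.natDegree : ℤ) - q.natDegree := by
    have h1 : toR p = (toR p / toR q) * toR q := by field_simp
    have := RatFunc.intDegree_mul hf hq'
    rw [← h1] at this
    have h2 : (toR p).intDegree = (p.natDegree : ℤ) := RatFunc.intDegree_polynomial
    have h3 : (toR q).intDegree = (q.natDegree : ℤ) := RatFunc.intDegree_polynomial
    omega
  rw [Rabs, if_neg hf, hdeg, Oabs_ne _ hp, Oabs_ne _ hq]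
  rw [zpow_sub₀ (ne_of_gt Q_pos)]
  norm_num [zpow_natCast]

lemma diff_frac (p p' r r' : Fq[X]) (hr : r ≠ 0) (hr' : r' ≠ 0) :
    toR p / toR r - toR p' / toR r' = toR (p * r' - p' * r) / toR (r * r') := by
  have h1 : toR r ≠ 0 := toR_ne_zero hr
  have h2 : toR r' ≠ 0 := toR_ne_zero hr'
  rw [map_sub, _root_.map_mul, _root_.map_mul, _root_.map_mul]
  field_simp

/-- Main estimate for part (i): `D ≤ max |v1| |v2|`. -/
lemma part1_core (c : Fq[X] × Fq[X]) (hc : Primitive c) (d : Fq[X]) (hd : d.Monic)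
    (r r' : Fq[X]) (a a' : Fq[X] × Fq[X]) (k k' : Fq[X])
    (hrm : r.Monic) (hrm' : r'.Monic)
    (hk : d * (c.1 * a.1 + c.2 * a.2) = k * r) (hdk : IsCoprime d k)
    (hk' : d * (c.1 * a'.1 + c.2 * a'.2) = k' * r') (hdk' : IsCoprime d k')
    (hne : ¬ (a.1 * r' = a'.1 * r ∧ a.2 * r' = a'.2 * r))
    (hbig : (max (Oabs (d * c.1)) (Oabs (d * c.2))) ^ 2 ≤ Oabs r * Oabs r') :
    max (Oabs (d * c.1)) (Oabs (d * c.2)) ≤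
      max (Oabs (a.1 * r' - a'.1 * r)) (Oabs (a.2 * r' - a'.2 * r)) := by
  set v1 := a.1 * r' - a'.1 * r with hv1
  set v2 := a.2 * r' - a'.2 * r with hv2
  set D := max (Oabs (d * c.1)) (Oabs (d * c.2)) with hD
  have hd0 : d ≠ 0 := hd.ne_zero
  have hr0 : r ≠ 0 := hrm.ne_zero
  have hr0' : r' ≠ 0 := hrm'.ne_zero
  have hDpos : 0 < D := by
    rcases hc.2 with h1 | ⟨h1, h2⟩
    · exact lt_max_of_lt_left (Oabs_pos _ (mul_ne_zero hd0 h1.ne_zero))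
    · exact lt_max_of_lt_right (Oabs_pos _ (mul_ne_zero hd0 h2.ne_zero))
  have hkey : d * (c.1 * v1 + c.2 * v2) = (k - k') * (r * r') := by
    rw [hv1, hv2]; linear_combination r' * hk - r * hk'
  by_cases hkk : k = k'
  · -- orthogonal case
    have hcv : c.1 * v1 + c.2 * v2 = 0 := by
      have : d * (c.1 * v1 + c.2 * v2) = 0 := by rw [hkey, hkk]; ring
      exact (mul_eq_zero.mp this).resolve_left hd0
    obtain ⟨u, w, huw⟩ := hc.1
    set W := u * v2 - w * v1 with hW
    have hv1W : v1 = -(c.2 * W) := by rw [hW]; linear_combination u * hcv - v1 * huw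
    have hv2W : v2 = c.1 * W := by rw [hW]; linear_combination w * hcv - v2 * huw
    have hWne : W ≠ 0 := by
      intro h
      rw [h] at hv1W hv2W
      exact hne ⟨by linear_combination hv1W, by linear_combination hv2W⟩
    -- determinant: -W * k = d * det
    have hdet : (-(W * k)) * r = d * ((a.1 * a'.2 - a.2 * a'.1) * r) := by
      have h1 : a.2 * v1 - a.1 * v2 = r * (a.1 * a'.2 - a.2 * a'.1) := by
        rw [hv1, hv2]; ring
      have h2 : a.2 * v1 - a.1 * v2 = -(W * (c.1 * a.1 + c.2 * a.2)) := by
        rw [hv1W, hv2W]; ring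
      calc (-(W * k)) * r = -(W * (k * r)) := by ring
        _ = -(W * (d * (c.1 * a.1 + c.2 * a.2))) := by rw [hk]
        _ = d * (a.2 * v1 - a.1 * v2) := by rw [h2]; ring
        _ = d * ((a.1 * a'.2 - a.2 * a'.1) * r) := by rw [h1]; ring
    have hddvd : d ∣ W := by
      have : d ∣ W * k := by
        refine ⟨-(a.1 * a'.2 - a.2 * a'.1), ?_⟩
        have := mul_right_cancel₀ hr0 (by linear_combination hdet :
          (-(W * k)) * r = (d * (a.1 * a'.2 - a.2 * a'.1)) * r)
        linear_combination -this
      exact hdk.dvd_of_dvd_mul_right this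
    have hdW : Oabs d ≤ Oabs W := Oabs_dvd hddvd hWne
    have h1 : Oabs v1 = Oabs c.2 * Oabs W := by rw [hv1W, Oabs_neg, Oabs_mul]
    have h2 : Oabs v2 = Oabs c.1 * Oabs W := by rw [hv2W, Oabs_mul]
    rw [hD]
    apply max_le
    · refine le_trans ?_ (le_max_right (Oabs v1) (Oabs v2))
      rw [h2, Oabs_mul, mul_comm (Oabs d)]
      exact mul_le_mul_of_nonneg_left hdW (Oabs_nonneg c.1)
    · refine le_trans ?_ (le_max_left (Oabs v1) (Oabs v2))
      rw [h1, Oabs_mul, mul_comm (Oabs d)]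
      exact mul_le_mul_of_nonneg_left hdW (Oabs_nonneg c.2)
  · -- case k ≠ k'
    have hkk0 : k - k' ≠ 0 := sub_ne_zero.mpr hkk
    set V := max (Oabs v1) (Oabs v2) with hV
    have hub : Oabs (d * (c.1 * v1 + c.2 * v2)) ≤ D * V := by
      have e : d * (c.1 * v1 + c.2 * v2) = (d * c.1) * v1 + (d * c.2) * v2 := by ring
      rw [e]
      refine le_trans (Oabs_add_le _ _) ?_
      apply max_le
      · rw [Oabs_mul]
        exact mul_le_mul (le_max_left _ _) (le_max_left _ _) (Oabs_nonneg v1)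
          (le_of_lt hDpos)
      · rw [Oabs_mul]
        exact mul_le_mul (le_max_right _ _) (le_max_right _ _) (Oabs_nonneg v2)
          (le_of_lt hDpos)
    have hlb : Oabs r * Oabs r' ≤ Oabs (d * (c.1 * v1 + c.2 * v2)) := by
      rw [hkey, Oabs_mul, Oabs_mul]
      calc Oabs r * Oabs r' = 1 * (Oabs r * Oabs r') := (one_mul _).symm
        _ ≤ Oabs (k - k') * (Oabs r * Oabs r') := by
            apply mul_le_mul_of_nonneg_right (one_le_Oabs _ hkk0)
            exact mul_nonneg (Oabs_nonneg r) (Oabs_nonneg r')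
    have hDV : D * D ≤ D * V := by
      calc D * D = D ^ 2 := (sq D).symm
        _ ≤ Oabs r * Oabs r' := hbig
        _ ≤ D * V := le_trans hlb hub
    exact le_of_mul_le_mul_left hDV hDpos

lemma part2_core (c : Fq[X] × Fq[X]) (hc : Primitive c) (d : Fq[X]) (hd : d.Monic)
    (r : Fq[X]) (a : Fq[X] × Fq[X]) (k : Fq[X])
    (hrm : r.Monic) (hsmall : Oabs2 a < Oabs r) (htri : CoprimeTriple a.1 a.2 r)
    (hk : d * (c.1 * a.1 + c.2 * a.2) = k * r) (hdk : IsCoprime d k)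
    (hbig : (max (Oabs (d * c.1)) (Oabs (d * c.2))) ^ 2 ≤ Oabs r) :
    ∃ r2 n1 n2 : Fq[X], r2.Monic ∧ Oabs r < Oabs r2 ∧
      max (Oabs n1) (Oabs n2) < Oabs r2 ∧ CoprimeTriple n1 n2 r2 ∧
      d * (c.1 * n1 + c.2 * n2) = k * r2 ∧
      a.1 * r2 - n1 * r = d * c.2 ∧ a.2 * r2 - n2 * r = -(d * c.1) := by
  have hd0 : d ≠ 0 := hd.ne_zero
  have hr0 : r ≠ 0 := hrm.ne_zero
  obtain ⟨u, w, huw⟩ := hc.1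
  -- Bezout for the triple a.1, a.2, r
  obtain ⟨α, β, γ, hBez⟩ : ∃ α β γ : Fq[X], α * a.1 + β * a.2 + γ * r = 1 := by
    set g1 := EuclideanDomain.gcd a.1 a.2 with hg1def
    have hg1 : g1 = a.1 * EuclideanDomain.gcdA a.1 a.2 + a.2 * EuclideanDomain.gcdB a.1 a.2 :=
      EuclideanDomain.gcd_eq_gcd_ab a.1 a.2
    set g := EuclideanDomain.gcd g1 r with hgdef
    have hg : g = g1 * EuclideanDomain.gcdA g1 r + r * EuclideanDomain.gcdB g1 r :=
      EuclideanDomain.gcd_eq_gcd_ab g1 r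
    have hgu : IsUnit g := by
      refine htri g ?_ ?_ ?_
      · exact dvd_trans (EuclideanDomain.gcd_dvd_left g1 r) (EuclideanDomain.gcd_dvd_left _ _)
      · exact dvd_trans (EuclideanDomain.gcd_dvd_left g1 r) (EuclideanDomain.gcd_dvd_right _ _)
      · exact EuclideanDomain.gcd_dvd_right g1 r
    obtain ⟨gi, hgi⟩ := hgu.exists_right_inv
    set A := EuclideanDomain.gcdA g1 r
    set B := EuclideanDomain.gcdB g1 r
    refine ⟨EuclideanDomain.gcdA a.1 a.2 * A * gi, EuclideanDomain.gcdB a.1 a.2 * A * gi,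
      B * gi, ?_⟩
    linear_combination (-(A * gi)) * hg1 + (-gi) * hg + hgi
  set lam := α * (d * c.2) - β * (d * c.1) with hlamdef
  have hlam1 : lam * a.1 - d * c.2 = r * (-(β * k) - γ * (d * c.2)) := by
    rw [hlamdef]; linear_combination (d * c.2) * hBez - β * hk
  have hlam2 : lam * a.2 + d * c.1 = r * (α * k + γ * (d * c.1)) := by
    rw [hlamdef]; linear_combination (-(d * c.1)) * hBez + α * hk
  set s : Fq[X] := X - lam /ₘ r with hsdef
  set r2 := r * X + lam %ₘ r with hr2def
  have hr2 : r2 = lam + r * s := by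
    have hmd := modByMonic_add_div lam r
    rw [hr2def, hsdef]; linear_combination hmd
  have hrXm : (r * X).Monic := hrm.mul monic_X
  have hdeglt : (lam %ₘ r).degree < (r * X).degree := by
    refine lt_of_lt_of_le (degree_modByMonic_lt lam hrm) ?_
    rw [degree_mul, degree_X]
    exact le_add_of_nonneg_right zero_le_one
  have hr2m : r2.Monic := hrXm.add_of_left hdeglt
  have hr2deg : r2.natDegree = r.natDegree + 1 := by
    have h := degree_add_eq_left_of_degree_lt hdeglt
    have := natDegree_eq_of_degree_eq (h.trans rfl)
    rw [hr2def]
    rw [natDegree_eq_of_degree_eq h, natDegree_mul hr0 X_ne_zero, natDegree_X]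
  have hr20 : r2 ≠ 0 := hr2m.ne_zero
  have hrlt : Oabs r < Oabs r2 := by
    rw [Oabs_ne r hr0, Oabs_ne r2 hr20, hr2deg]
    exact pow_lt_pow_right₀ one_lt_Q (by omega)
  set n1 := -(β * k) - γ * (d * c.2) + a.1 * s with hn1def
  set n2 := α * k + γ * (d * c.1) + a.2 * s with hn2def
  have h1 : a.1 * r2 - d * c.2 = r * n1 := by
    rw [hn1def]; linear_combination hlam1 + a.1 * hr2
  have h2 : a.2 * r2 + d * c.1 = r * n2 := by
    rw [hn2def]; linear_combination hlam2 + a.2 * hr2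
  have hline : d * (c.1 * n1 + c.2 * n2) = k * r2 := by
    apply mul_right_cancel₀ hr0
    linear_combination (-(d * c.1)) * h1 + (-(d * c.2)) * h2 + r2 * hk
  have hdet : n1 * a.2 - n2 * a.1 = -k := by
    apply mul_right_cancel₀ hr0
    linear_combination (-(a.2)) * h1 + a.1 * h2 - hk
  -- coprimality
  have htri2 : CoprimeTriple n1 n2 r2 := by
    intro p hp1 hp2 hpr2
    have hpk : p ∣ k := by
      have : p ∣ n2 * a.1 - n1 * a.2 := dvd_sub (hp2.mul_right a.1) (hp1.mul_right a.2)
      have hkeq : k = n2 * a.1 - n1 * a.2 := by linear_combination hdet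
      rwa [← hkeq] at this
    have hpdc2 : p ∣ d * c.2 := by
      have : p ∣ a.1 * r2 - r * n1 := dvd_sub (hpr2.mul_left a.1) (hp1.mul_left r)
      have he : d * c.2 = a.1 * r2 - r * n1 := by linear_combination -h1
      rwa [← he] at this
    have hpdc1 : p ∣ d * c.1 := by
      have : p ∣ r * n2 - a.2 * r2 := dvd_sub (hp2.mul_left r) (hpr2.mul_left a.2)
      have he : d * c.1 = r * n2 - a.2 * r2 := by linear_combination h2
      rwa [← he] at this
    have hpd : p ∣ d := by
      have : p ∣ u * (d * c.1) + w * (d * c.2) := dvd_add (hpdc1.mul_left u) (hpdc2.mul_left w)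
      have he : d = u * (d * c.1) + w * (d * c.2) := by linear_combination (-d) * huw
      rwa [← he] at this
    exact hdk.isUnit_of_dvd' hpd hpk
  -- size bounds
  set D := max (Oabs (d * c.1)) (Oabs (d * c.2)) with hD
  have hD1 : 1 ≤ D := by
    rcases hc.2 with h | ⟨h, h'⟩
    · exact le_max_of_le_left (one_le_Oabs _ (mul_ne_zero hd0 h.ne_zero))
    · exact le_max_of_le_right (one_le_Oabs _ (mul_ne_zero hd0 h'.ne_zero))
  have hDr : D ≤ Oabs r := le_trans (le_trans (by nlinarith) hbig) le_rfl
  have hOr1 : 1 ≤ Oabs r := one_le_Oabs r hr0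
  have hOr2pos : 0 < Oabs r2 := Oabs_pos r2 hr20
  have hdc_lt : ∀ x : Fq[X], Oabs x ≤ D → Oabs x < Oabs r * Oabs r2 := by
    intro x hx
    calc Oabs x ≤ Oabs r := le_trans hx hDr
      _ = Oabs r * 1 := (mul_one _).symm
      _ < Oabs r * Oabs r2 := by
          apply mul_lt_mul_of_pos_left (lt_of_le_of_lt hOr1 hrlt)
          exact lt_of_lt_of_le one_pos hOr1
  have hbound : ∀ (x n e : Fq[X]), Oabs x < Oabs r → x * r2 + e = r * n → Oabs e ≤ D →
      Oabs n < Oabs r2 := by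
    intro x n e hxr heq he
    have hrn : Oabs r * Oabs n < Oabs r * Oabs r2 := by
      rw [← Oabs_mul, ← heq]
      refine lt_of_le_of_lt (Oabs_add_le _ _) (max_lt ?_ (hdc_lt e he))
      rw [Oabs_mul]
      exact mul_lt_mul_of_pos_right hxr hOr2pos
    exact lt_of_mul_lt_mul_left hrn (Oabs_nonneg r)
  have ha1 : Oabs a.1 < Oabs r := lt_of_le_of_lt (le_max_left _ _) hsmall
  have ha2 : Oabs a.2 < Oabs r := lt_of_le_of_lt (le_max_right _ _) hsmall
  have hn1b : Oabs n1 < Oabs r2 := by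
    refine hbound a.1 n1 (-(d * c.2)) ha1 (by linear_combination h1) ?_
    rw [Oabs_neg]; exact le_max_right _ _
  have hn2b : Oabs n2 < Oabs r2 := by
    refine hbound a.2 n2 (d * c.1) ha2 (by linear_combination h2) (le_max_left _ _)
  exact ⟨r2, n1, n2, hr2m, hrlt, max_lt hn1b hn2b, htri2, hline,
    by linear_combination h1, by linear_combination h2⟩


lemma div_le_div_of_nonneg_right' {a b c : ℝ} (h : a ≤ b) (hc : 0 < c) : a / c ≤ b / c := by
  gcongr

/-- Spacing of rational points on a generalised line `L(d·c)`:
(i) two distinct points `a/r ≠ a'/r'` on `L(d·c)` with `|d·c|² ≤ |r||r'|` are at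
distance at least `|d·c|/(|r||r'|)`; (ii) every point `a/r` on `L(d·c)`, say with
`d(c·a) = k·r`, `gcd(d,k) = 1` and `|d·c|² ≤ |r|`, has a neighbour `a₂/r₂` on `L(d·c)`
with the same `k`, `|r| < |r₂|` and `|a/r − a₂/r₂| = |d·c|/(|r||r₂|)`. -/
theorem stmt_15 (Fq : Type) [Field Fq] [Fintype Fq]
    (c : Fq[X] × Fq[X]) (hc : Primitive c) (d : Fq[X]) (hd : d.Monic) :
    (∀ r r' : Fq[X], ∀ a a' : Fq[X] × Fq[X],
      r.Monic → r'.Monic →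
      Oabs2 a < Oabs r → CoprimeTriple a.1 a.2 r → OnLine d c r a →
      Oabs2 a' < Oabs r' → CoprimeTriple a'.1 a'.2 r' → OnLine d c r' a' →
      ¬ (a.1 * r' = a'.1 * r ∧ a.2 * r' = a'.2 * r) →
      (max (Oabs (d * c.1)) (Oabs (d * c.2))) ^ 2 ≤ Oabs r * Oabs r' →
      max (Oabs (d * c.1)) (Oabs (d * c.2)) / (Oabs r * Oabs r') ≤
        max (Rabs (toR a.1 / toR r - toR a'.1 / toR r'))
            (Rabs (toR a.2 / toR r - toR a'.2 / toR r'))) ∧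
    (∀ r : Fq[X], ∀ a : Fq[X] × Fq[X], ∀ k : Fq[X],
      r.Monic → Oabs2 a < Oabs r → CoprimeTriple a.1 a.2 r →
      d * (c.1 * a.1 + c.2 * a.2) = k * r → IsCoprime d k →
      (max (Oabs (d * c.1)) (Oabs (d * c.2))) ^ 2 ≤ Oabs r →
      ∃ r2 : Fq[X], ∃ a2 : Fq[X] × Fq[X],
        r2.Monic ∧ Oabs r < Oabs r2 ∧
        Oabs2 a2 < Oabs r2 ∧ CoprimeTriple a2.1 a2.2 r2 ∧
        d * (c.1 * a2.1 + c.2 * a2.2) = k * r2 ∧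
        max (Rabs (toR a.1 / toR r - toR a2.1 / toR r2))
            (Rabs (toR a.2 / toR r - toR a2.2 / toR r2))
          = max (Oabs (d * c.1)) (Oabs (d * c.2)) / (Oabs r * Oabs r2)) := by
  constructor
  · -- part (i)
    intro r r' a a' hrm hrm' hsmall htri hline hsmall' htri' hline' hne hbig
    obtain ⟨k, hk, hdk⟩ := hline
    obtain ⟨k', hk', hdk'⟩ := hline'
    have hr0 : r ≠ 0 := hrm.ne_zero
    have hr0' : r' ≠ 0 := hrm'.ne_zero
    have hM : (0:ℝ) < Oabs r * Oabs r' :=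
      mul_pos (Oabs_pos r hr0) (Oabs_pos r' hr0')
    have hcore := part1_core c hc d hd r r' a a' k k' hrm hrm' hk hdk hk' hdk' hne hbig
    rw [diff_frac a.1 a'.1 r r' hr0 hr0', diff_frac a.2 a'.2 r r' hr0 hr0',
      Rabs_div _ _ (mul_ne_zero hr0 hr0'), Rabs_div _ _ (mul_ne_zero hr0 hr0'),
      Oabs_mul r r', max_div_div_right hM.le]
    exact div_le_div_of_nonneg_right' hcore hM
  · -- part (ii)
    intro r a k hrm hsmall htri hk hdk hbig
    obtain ⟨r2, n1, n2, hr2m, hrlt, hnb, htri2, hline, he1, he2⟩ :=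
      part2_core c hc d hd r a k hrm hsmall htri hk hdk hbig
    have hr0 : r ≠ 0 := hrm.ne_zero
    have hr20 : r2 ≠ 0 := hr2m.ne_zero
    have hM : (0:ℝ) < Oabs r * Oabs r2 :=
      mul_pos (Oabs_pos r hr0) (Oabs_pos r2 hr20)
    refine ⟨r2, (n1, n2), hr2m, hrlt, hnb, htri2, hline, ?_⟩
    have d1 : toR a.1 / toR r - toR n1 / toR r2 = toR (d * c.2) / toR (r * r2) := by
      rw [diff_frac a.1 n1 r r2 hr0 hr20, he1]
    have d2 : toR a.2 / toR r - toR n2 / toR r2 = toR (-(d * c.1)) / toR (r * r2) := by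
      rw [diff_frac a.2 n2 r r2 hr0 hr20, he2]
    rw [d1, d2, Rabs_div _ _ (mul_ne_zero hr0 hr20), Rabs_div _ _ (mul_ne_zero hr0 hr20),
      Oabs_neg, Oabs_mul r r2, max_div_div_right hM.le, max_comm (Oabs (d * c.2))]

end
end
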